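/- Let P = {p₁ < ⋯ < pₙ} and Q = {q₁ < ⋯ < qₙ} be two n-element sets of reals with P ≠ Q, and suppose the claim of the selection lemma holds for all smaller n. Then one can transform P into Q in at most n steps, where each step replaces a single element pᵢ by qᵢ (with pᵢ ≠ qᵢ) in such a way that the relative order of the current n elements is preserved throughout (i.e., replacing pᵢ by qᵢ does not change the rank of any element). -/
import Mathlib

theorem stmt_4 (n : ℕ) (p q : Fin n → ℝ)
    (hp : StrictMono p) (hq : StrictMono q) (hne : p ≠ q)
    (hIH : ∀ m : ℕ, m < n → ∀ p' q' : Fin m → ℝ, StrictMono p' → StrictMono q' →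
      p' ≠ q' → ∃ i : Fin m, p' i ≠ q' i ∧
        ∀ j : Fin m, ¬ (min (p' i) (q' i) < p' j ∧ p' j < max (p' i) (q' i))) :
    ∃ (k : ℕ) (g : Fin (k + 1) → Fin n → ℝ), k ≤ n ∧
      g 0 = p ∧ g (Fin.last k) = q ∧
      (∀ j : Fin (k + 1), StrictMono (g j)) ∧
      ∀ j : Fin k, ∃ i : Fin n,
        p i ≠ q i ∧
        g j.succ i = q i ∧
        (∀ i' : Fin n, i' ≠ i → g j.succ i' = g j.castSucc i') := by
  classical
  suffices H : ∀ d : ℕ, ∀ f : Fin n → ℝ, StrictMono f →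
      (∀ i, f i = p i ∨ f i = q i) →
      (Finset.univ.filter (fun i => f i ≠ q i)).card ≤ d →
      ∃ (k : ℕ) (g : Fin (k + 1) → Fin n → ℝ), k ≤ d ∧
        g 0 = f ∧ g (Fin.last k) = q ∧
        (∀ j : Fin (k + 1), StrictMono (g j)) ∧
        ∀ j : Fin k, ∃ i : Fin n, p i ≠ q i ∧ g j.succ i = q i ∧
          ∀ i' : Fin n, i' ≠ i → g j.succ i' = g j.castSucc i' by
    obtain ⟨k, g, hk, h0, hl, hm, hs⟩ := H n p hp (fun i => Or.inl rfl)
      (le_trans (Finset.card_filter_le _ _) (by simp))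
    exact ⟨k, g, hk, h0, hl, hm, hs⟩
  intro d
  induction d with
  | zero =>
    intro f hf hfpq hcard
    have hfq : f = q := by
      funext i
      by_contra hi
      have hmem : i ∈ Finset.univ.filter (fun i => f i ≠ q i) := by
        simp [hi]
      have := Finset.card_pos.mpr ⟨i, hmem⟩
      omega
    refine ⟨0, fun _ => q, le_refl 0, ?_, rfl, fun _ => hq, fun j => j.elim0⟩
    rw [hfq]
  | succ d ih =>
    intro f hf hfpq hcard
    by_cases hfq : f = q
    · refine ⟨0, fun _ => q, Nat.zero_le _, ?_, rfl, fun _ => hq, fun j => j.elim0⟩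
      rw [hfq]
    -- choose a good index i
    have hchoice : ∃ i : Fin n, f i ≠ q i ∧ (∀ a, a < i → f a < q i) ∧
        (∀ b, i < b → q i < f b) := by
      by_cases hA : (Finset.univ.filter (fun i => f i < q i)).Nonempty
      · set S := Finset.univ.filter (fun i => f i < q i) with hS
        refine ⟨S.max' hA, ?_, ?_, ?_⟩
        · have := (Finset.mem_filter.mp (S.max'_mem hA)).2
          exact ne_of_lt this
        · intro a ha
          have hi := (Finset.mem_filter.mp (S.max'_mem hA)).2
          exact lt_trans (hf ha) hi
        · intro b hb
          have hbS : b ∉ S := fun hbS => absurd (S.le_max' b hbS) (not_le.mpr hb)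
          have hqb : q b ≤ f b := by
            by_contra h
            exact hbS (Finset.mem_filter.mpr ⟨Finset.mem_univ b, not_le.mp h⟩)
          exact lt_of_lt_of_le (hq hb) hqb
      · -- all f i ≥ q i
        have hge : ∀ i, q i ≤ f i := by
          intro i
          by_contra h
          exact hA ⟨i, by simp [not_le.mp h]⟩
        have hT : (Finset.univ.filter (fun i => f i ≠ q i)).Nonempty := by
          rcases Function.ne_iff.mp hfq with ⟨i, hi⟩
          exact ⟨i, by simp [hi]⟩
        set T := Finset.univ.filter (fun i => f i ≠ q i) with hTdef
        refine ⟨T.min' hT, ?_, ?_, ?_⟩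
        · exact (Finset.mem_filter.mp (T.min'_mem hT)).2
        · intro a ha
          have haT : a ∉ T := fun haT => absurd (T.min'_le a haT) (not_le.mpr ha)
          have : f a = q a := by
            by_contra h
            exact haT (Finset.mem_filter.mpr ⟨Finset.mem_univ a, h⟩)
          rw [this]
          exact hq ha
        · intro b hb
          have hi := (Finset.mem_filter.mp (T.min'_mem hT)).2
          have : q (T.min' hT) < f (T.min' hT) := lt_of_le_of_ne (hge _) (Ne.symm hi)
          exact lt_trans this (hf hb)
    obtain ⟨i, hiq, hlt, hgt⟩ := hchoice
    have hfpi : f i = p i := (hfpq i).resolve_right hiq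
    set f' := Function.update f i (q i) with hf'def
    have hmono' : StrictMono f' := by
      intro a b hab
      rcases eq_or_ne a i with rfl | ha
      · rw [hf'def, Function.update_self, Function.update_of_ne hab.ne']
        exact hgt b hab
      · rw [hf'def, Function.update_of_ne ha]
        rcases eq_or_ne b i with rfl | hb
        · rw [Function.update_self]
          exact hlt a hab
        · rw [Function.update_of_ne hb]
          exact hf hab
    have hfpq' : ∀ j, f' j = p j ∨ f' j = q j := by
      intro j
      rcases eq_or_ne j i with rfl | hj
      · right; rw [hf'def, Function.update_self]
      · rw [hf'def, Function.update_of_ne hj]; exact hfpq j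
    have hcard' : (Finset.univ.filter (fun j => f' j ≠ q j)).card ≤ d := by
      have hsub : (Finset.univ.filter (fun j => f' j ≠ q j)) ⊆
          (Finset.univ.filter (fun j => f j ≠ q j)).erase i := by
        intro j hj
        rw [Finset.mem_filter] at hj
        rcases eq_or_ne j i with rfl | hji
        · exact absurd (by rw [hf'def, Function.update_self]) hj.2
        · rw [Finset.mem_erase, Finset.mem_filter]
          rw [hf'def, Function.update_of_ne hji] at hj
          exact ⟨hji, Finset.mem_univ j, hj.2⟩
      have hiT : i ∈ Finset.univ.filter (fun j => f j ≠ q j) := by simp [hiq]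
      calc (Finset.univ.filter (fun j => f' j ≠ q j)).card
          ≤ ((Finset.univ.filter (fun j => f j ≠ q j)).erase i).card :=
            Finset.card_le_card hsub
        _ = (Finset.univ.filter (fun j => f j ≠ q j)).card - 1 :=
            Finset.card_erase_of_mem hiT
        _ ≤ d := by omega
    obtain ⟨k, g, hk, h0, hl, hm, hs⟩ := ih f' hmono' hfpq' hcard'
    refine ⟨k + 1, Fin.cases f g, by omega, Fin.cases_zero .., ?_, ?_, ?_⟩
    · rw [← Fin.succ_last]
      simp only [Fin.cases_succ]
      exact hl
    · intro j
      induction j using Fin.cases with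
      | zero => simpa using hf
      | succ j' => simpa using hm j'
    · intro j
      induction j using Fin.cases with
      | zero =>
        refine ⟨i, by rw [← hfpi]; exact hiq, ?_, ?_⟩
        · simp only [Fin.cases_succ, h0, hf'def]
          rw [Function.update_self]
        · intro i' hi'
          simp only [Fin.cases_succ, Fin.castSucc_zero, Fin.cases_zero, h0, hf'def]
          rw [Function.update_of_ne hi']
      | succ j' =>
        obtain ⟨i₀, hi₀, hs1, hs2⟩ := hs j'
        refine ⟨i₀, hi₀, ?_, ?_⟩
        · simp only [Fin.cases_succ]; exact hs1
        · intro i' hi'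
          simp only [Fin.cases_succ, ← Fin.succ_castSucc]
          exact hs2 i' hi'
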